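/- Let n ≥ 1 and let L ∈ ℝ^{n×n} satisfy L𝟙 = 0 and 𝟙ᵀL = 0, and set σ = ‖I − Π − L‖ where Π = (1/n)𝟙𝟙ᵀ and ‖·‖ is the ℓ² operator (spectral) norm. If σ < 1, then for every y ∈ ℝⁿ the quadratic constraint (σ² − 1)·yᵀ(I − Π)y + 2·yᵀ(I − Π)(Ly) − (Ly)ᵀ(I − Π)(Ly) ≥ 0 holds; equivalently, the pair (y, Ly) satisfies the sector quadratic constraint with matrix [[(σ²−1)(I−Π), (I−Π)],[(I−Π), −(I−Π)]]. -/

import Mathlib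

open Matrix

/-- The ℓ² operator (spectral) norm of a real square matrix. -/
noncomputable def spectralNormL2 {n : ℕ} (M : Matrix (Fin n) (Fin n) ℝ) : ℝ :=
  ‖Matrix.toEuclideanCLM (𝕜 := ℝ) M‖

/-- The all-ones vector 𝟙 ∈ ℝⁿ. -/
def onesVec (n : ℕ) : Fin n → ℝ := fun _ => 1

/-- The projection Π = (1/n)𝟙𝟙ᵀ onto the consensus subspace. -/
noncomputable def consensusProj (n : ℕ) : Matrix (Fin n) (Fin n) ℝ :=
  Matrix.of fun _ _ => (n : ℝ)⁻¹

lemma dot_self_eq_norm_sq {n : ℕ} (v : Fin n → ℝ) :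
    v ⬝ᵥ v = ‖(WithLp.equiv 2 (Fin n → ℝ)).symm v‖ ^ 2 := by
  rw [EuclideanSpace.norm_eq, Real.sq_sqrt (by positivity)]
  simp [dotProduct, sq_abs, sq]

lemma mulVec_dot_le {n : ℕ} (A : Matrix (Fin n) (Fin n) ℝ) (x : Fin n → ℝ) :
    (A *ᵥ x) ⬝ᵥ (A *ᵥ x) ≤ spectralNormL2 A ^ 2 * (x ⬝ᵥ x) := by
  have h := (Matrix.toEuclideanCLM (𝕜 := ℝ) A).le_opNorm
    ((WithLp.equiv 2 (Fin n → ℝ)).symm x)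
  change ‖(WithLp.equiv 2 (Fin n → ℝ)).symm (A *ᵥ x)‖ ≤ _ at h
  have h2 : ‖(WithLp.equiv 2 (Fin n → ℝ)).symm (A *ᵥ x)‖ ^ 2
      ≤ (spectralNormL2 A * ‖(WithLp.equiv 2 (Fin n → ℝ)).symm x‖) ^ 2 := by
    apply pow_le_pow_left₀ (norm_nonneg _) h
  rw [dot_self_eq_norm_sq, dot_self_eq_norm_sq]
  calc ‖(WithLp.equiv 2 (Fin n → ℝ)).symm (A *ᵥ x)‖ ^ 2
      ≤ (spectralNormL2 A * ‖(WithLp.equiv 2 (Fin n → ℝ)).symm x‖) ^ 2 := h2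
    _ = spectralNormL2 A ^ 2 * ‖(WithLp.equiv 2 (Fin n → ℝ)).symm x‖ ^ 2 := by ring

/-- If `L𝟙 = 0`, `𝟙ᵀL = 0` and `σ = ‖I − Π − L‖ < 1`, then for every
`y ∈ ℝⁿ` the pair `(y, Ly)` satisfies the sector quadratic constraint
`(σ² − 1)·yᵀ(I − Π)y + 2·yᵀ(I − Π)(Ly) − (Ly)ᵀ(I − Π)(Ly) ≥ 0`. -/
theorem laplacian_sector_iqc {n : ℕ} (hn : 1 ≤ n) (L : Matrix (Fin n) (Fin n) ℝ)
    (hL1 : L *ᵥ onesVec n = 0) (hL2 : onesVec n ᵥ* L = 0)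
    (σ : ℝ) (hσ : σ = spectralNormL2 (1 - consensusProj n - L)) (hσ1 : σ < 1) :
    ∀ y : Fin n → ℝ,
      (σ ^ 2 - 1) * (y ⬝ᵥ ((1 - consensusProj n) *ᵥ y))
        + 2 * (y ⬝ᵥ ((1 - consensusProj n) *ᵥ (L *ᵥ y)))
        - ((L *ᵥ y) ⬝ᵥ ((1 - consensusProj n) *ᵥ (L *ᵥ y))) ≥ 0 := by
  intro y
  set P : Matrix (Fin n) (Fin n) ℝ := 1 - consensusProj n with hP
  have hn0 : (n : ℝ) ≠ 0 := by positivity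
  -- Pi is idempotent
  have hPiPi : consensusProj n * consensusProj n = consensusProj n := by
    ext i j
    simp [consensusProj, Matrix.mul_apply, Finset.sum_const, Finset.card_fin]
    field_simp
  -- Pi L = 0
  have hPiL : consensusProj n * L = 0 := by
    ext i j
    have := congrFun hL2 j
    simp [vecMul, dotProduct, onesVec] at this
    simp [consensusProj, Matrix.mul_apply, ← Finset.mul_sum, this]
  -- L Pi = 0
  have hLPi : L * consensusProj n = 0 := by
    ext i j
    have := congrFun hL1 i
    simp [mulVec, dotProduct, onesVec] at this
    simp [consensusProj, Matrix.mul_apply, ← Finset.sum_mul, this]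
  have hPP : P * P = P := by
    simp only [hP, sub_mul, mul_sub, one_mul, mul_one, hPiPi]
    abel
  have hPL : P * L = L := by
    simp only [hP, sub_mul, one_mul, hPiL]
    abel
  have hLP : L * P = L := by
    simp only [hP, mul_sub, mul_one, hLPi]
    abel
  have hPsymm : Pᵀ = P := by
    ext i j
    simp [hP, consensusProj, Matrix.one_apply, eq_comm]
  -- symmetry of P in dot products
  have hsym : ∀ a b : Fin n → ℝ, a ⬝ᵥ (P *ᵥ b) = (P *ᵥ a) ⬝ᵥ b := by
    intro a b
    rw [Matrix.dotProduct_mulVec, ← Matrix.mulVec_transpose, hPsymm]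
  set u : Fin n → ℝ := P *ᵥ y with hu
  have hPu : P *ᵥ u = u := by rw [hu, Matrix.mulVec_mulVec, hPP]
  have hLy : L *ᵥ y = L *ᵥ u := by rw [hu, Matrix.mulVec_mulVec, hLP]
  have hPLy : P *ᵥ (L *ᵥ y) = L *ᵥ y := by rw [Matrix.mulVec_mulVec, hPL]
  set w : Fin n → ℝ := (P - L) *ᵥ u with hw
  have hLu : L *ᵥ u = u - w := by
    rw [hw, Matrix.sub_mulVec, hPu]
    abel
  -- rewrite goal terms
  have e1 : y ⬝ᵥ (P *ᵥ y) = u ⬝ᵥ u := by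
    have h := hsym y (P *ᵥ y)
    rw [Matrix.mulVec_mulVec, hPP] at h
    exact h
  have e2 : y ⬝ᵥ (P *ᵥ (L *ᵥ y)) = u ⬝ᵥ (u - w) := by
    rw [hsym y (L *ᵥ y), hLy, hLu]
  have e3 : (L *ᵥ y) ⬝ᵥ (P *ᵥ (L *ᵥ y)) = (u - w) ⬝ᵥ (u - w) := by
    rw [hPLy, hLy, hLu]
  rw [e1, e2, e3]
  -- key bound
  have hσ0 : 0 ≤ σ := by rw [hσ]; exact norm_nonneg _
  have hM : (1 : Matrix (Fin n) (Fin n) ℝ) - consensusProj n - L = P - L := by rw [hP]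
  have hbound : w ⬝ᵥ w ≤ σ ^ 2 * (u ⬝ᵥ u) := by
    rw [hσ, hM, hw]
    exact mulVec_dot_le (P - L) u
  have expand : (σ ^ 2 - 1) * (u ⬝ᵥ u) + 2 * (u ⬝ᵥ (u - w)) - (u - w) ⬝ᵥ (u - w)
      = σ ^ 2 * (u ⬝ᵥ u) - w ⬝ᵥ w := by
    rw [dotProduct_sub, dotProduct_sub, sub_dotProduct,
      sub_dotProduct, dotProduct_comm w u]
    ring
  rw [expand]
  linarith
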